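/- Let M and X be disjoint finite sets and y ∉ M∪X. Let f_X be a polymatroid on M∪X and f_y a polymatroid on M∪{y}, with coinciding restrictions to subsets of M. Then f_X and f_y are adhesive if and only if f_X and f_y↓y have an amalgam, where f_y↓y = f_y − f_y(y|M)·r_{{y}} is the tightening of f_y at y. -/

import Mathlib

open Finset

noncomputable section

variable {α : Type*} [DecidableEq α]

/-- `f` is a polymatroid with ground set `M`: it vanishes on `∅` and is
non-negative, monotone and submodular on subsets of `M`. -/
def IsPolymatroid (M : Finset α) (f : Finset α → ℝ) : Prop :=
  f ∅ = 0 ∧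
  (∀ A, A ⊆ M → 0 ≤ f A) ∧
  (∀ A B, A ⊆ B → B ⊆ M → f A ≤ f B) ∧
  (∀ A B, A ⊆ M → B ⊆ M → f (A ∪ B) + f (A ∩ B) ≤ f A + f B)

/-- `pmi f I J K` is the expression `f(I,J|K) = f(I∪K)+f(J∪K)−f(I∪J∪K)−f(K)`. -/
def pmi (f : Finset α → ℝ) (I J K : Finset α) : ℝ :=
  f (I ∪ K) + f (J ∪ K) - f (I ∪ J ∪ K) - f K

/-- `pcd f I K` is the expression `f(I|K) = f(I∪K) − f(K)`. -/
def pcd (f : Finset α → ℝ) (I K : Finset α) : ℝ := f (I ∪ K) - f K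

/-- `runit A` is the rank function `r_A`: `r_A(I) = 1` if `A ∩ I ≠ ∅`, else `0`. -/
def runit (A I : Finset α) : ℝ := if (A ∩ I).Nonempty then 1 else 0

/-- Tightening of `f` at `a` (relative to ground set `M`):
`f↓a = f − f(a|M∖{a})·r_{{a}}`. -/
def tightenAt (M : Finset α) (f : Finset α → ℝ) (a : α) : Finset α → ℝ :=
  fun I => f I - pcd f {a} (M \ {a}) * runit {a} I

/-- Polymatroids `fX` on `M ∪ X` and `fY` on `M ∪ Y` have an amalgam: a common
polymatroid extension on `M ∪ X ∪ Y`. -/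
def HaveAmalgam (M X Y : Finset α) (fX fY : Finset α → ℝ) : Prop :=
  ∃ g : Finset α → ℝ, IsPolymatroid (M ∪ X ∪ Y) g ∧
    (∀ A, A ⊆ M ∪ X → g A = fX A) ∧ (∀ A, A ⊆ M ∪ Y → g A = fY A)

/-- Polymatroids `fX` on `M ∪ X` and `fY` on `M ∪ Y` are adhesive: they have a
modular common extension, i.e. one with `g(X,Y|M) = 0`. -/
def Adhesive (M X Y : Finset α) (fX fY : Finset α → ℝ) : Prop :=
  ∃ g : Finset α → ℝ, IsPolymatroid (M ∪ X ∪ Y) g ∧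
    (∀ A, A ⊆ M ∪ X → g A = fX A) ∧ (∀ A, A ⊆ M ∪ Y → g A = fY A) ∧
    pmi g X Y M = 0

lemma runit_singleton (y : α) (A : Finset α) :
    runit {y} A = if y ∈ A then 1 else 0 := by
  unfold runit
  by_cases h : y ∈ A
  · simp [Finset.singleton_inter_of_mem h, h]
  · simp [Finset.singleton_inter_of_notMem h, h]

/-- `f_X` and `f_y` are adhesive iff `f_X` and the tightening
`f_y↓y` have an amalgam. -/
theorem statement_7 (M X : Finset α) (y : α)
    (hMX : Disjoint M X) (hy : y ∉ M ∪ X)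
    (fX fy : Finset α → ℝ)
    (hfX : IsPolymatroid (M ∪ X) fX) (hfy : IsPolymatroid (M ∪ {y}) fy)
    (hcommon : ∀ A ⊆ M, fX A = fy A) :
    Adhesive M X {y} fX fy ↔ HaveAmalgam M X {y} fX (tightenAt (M ∪ {y}) fy y) := by
  obtain ⟨hX0, hXnn, hXmono, hXsub⟩ := hfX
  obtain ⟨hy0, hynn, hymono, hysub⟩ := hfy
  have hyM : y ∉ M := fun h => hy (Finset.mem_union_left _ h)
  have hyX : y ∉ X := fun h => hy (Finset.mem_union_right _ h)
  set e : ℝ := fy (M ∪ {y}) - fy M with he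
  have he0 : 0 ≤ e := by
    have := hymono M (M ∪ {y}) Finset.subset_union_left (le_refl _)
    rw [he]; linarith
  have hsd : (M ∪ {y}) \ {y} = M := by
    ext a
    simp only [Finset.mem_sdiff, Finset.mem_union, Finset.mem_singleton]
    constructor
    · rintro ⟨h | rfl, hn⟩
      · exact h
      · exact absurd rfl hn
    · intro h; exact ⟨Or.inl h, fun hh => hyM (hh ▸ h)⟩
  have htight : ∀ A, tightenAt (M ∪ {y}) fy y A
      = fy A - (if y ∈ A then e else 0) := by
    intro A
    unfold tightenAt pcd
    rw [hsd, runit_singleton, Finset.union_comm ({y} : Finset α) M]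
    by_cases h : y ∈ A <;> simp [h, he]
  have h3 : X ∪ {y} ∪ M = M ∪ X ∪ {y} := by
    ext a
    simp only [Finset.mem_union, Finset.mem_singleton]
    tauto
  have hU2 : (M ∪ X) ∪ (M ∪ {y}) = M ∪ X ∪ {y} := by
    ext a
    simp only [Finset.mem_union, Finset.mem_singleton]
    tauto
  have hI2 : (M ∪ X) ∩ (M ∪ {y}) = M := by
    ext a
    simp only [Finset.mem_inter, Finset.mem_union, Finset.mem_singleton]
    constructor
    · rintro ⟨h1 | h1, h2 | h2⟩
      · exact h1
      · exact h1
      · exact h2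
      · exact absurd (h2 ▸ h1) hyX
    · intro h; exact ⟨Or.inl h, Or.inl h⟩
  constructor
  · rintro ⟨g, ⟨hg0, hgnn, hgmono, hgsub⟩, hgX, hgY, hpmi⟩
    have hgE : g (M ∪ X ∪ {y}) = g (M ∪ X) + e := by
      have h1 : (X : Finset α) ∪ M = M ∪ X := Finset.union_comm _ _
      have h2 : g ({y} ∪ M) = fy (M ∪ {y}) := by
        rw [Finset.union_comm]
        exact hgY _ (le_refl _)
      have h4 : g M = fy M := hgY M Finset.subset_union_left
      unfold pmi at hpmi
      rw [h1, h2, h3, h4] at hpmi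
      rw [he]; linarith
    have hkey : ∀ B, B ⊆ M ∪ X ∪ {y} → y ∈ B → g (B \ {y}) + e ≤ g B := by
      intro B hB hyB
      have hU : B ∪ (M ∪ X) = M ∪ X ∪ {y} := by
        apply Finset.Subset.antisymm
        · exact Finset.union_subset hB Finset.subset_union_left
        · intro a ha
          rcases Finset.mem_union.mp ha with h | h
          · exact Finset.mem_union_right _ h
          · rw [Finset.mem_singleton] at h
            subst h
            exact Finset.mem_union_left _ hyB
      have hI : B ∩ (M ∪ X) = B \ {y} := by
        ext a
        simp only [Finset.mem_inter, Finset.mem_sdiff, Finset.mem_singleton]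
        constructor
        · rintro ⟨h1, h2⟩; exact ⟨h1, fun hh => hy (hh ▸ h2)⟩
        · rintro ⟨h1, h2⟩
          refine ⟨h1, ?_⟩
          rcases Finset.mem_union.mp (hB h1) with h | h
          · exact h
          · exact absurd (Finset.mem_singleton.mp h) h2
      have hs := hgsub B (M ∪ X) hB Finset.subset_union_left
      rw [hU, hI] at hs
      linarith
    refine ⟨fun A => g A - (if y ∈ A then e else 0), ⟨?_, ?_, ?_, ?_⟩, ?_, ?_⟩
    · simp [hg0]
    · intro A hA
      by_cases hyA : y ∈ A
      · have h1 := hkey A hA hyA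
        have h2 : (0:ℝ) ≤ g (A \ {y}) :=
          hgnn _ (Finset.Subset.trans (Finset.sdiff_subset) hA)
        simp only [hyA, if_true]
        linarith
      · simpa [hyA] using hgnn A hA
    · intro A B hAB hB
      by_cases hyB' : y ∈ B
      · by_cases hyA : y ∈ A
        · have := hgmono A B hAB hB
          simp only [hyA, hyB', if_true]
          linarith
        · have h1 : A ⊆ B \ {y} := by
            intro a ha
            exact Finset.mem_sdiff.mpr ⟨hAB ha,
              fun hh => hyA ((Finset.mem_singleton.mp hh) ▸ ha)⟩
          have h2 := hgmono A (B \ {y}) h1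
            (Finset.Subset.trans Finset.sdiff_subset hB)
          have h3' := hkey B hB hyB'
          simp only [hyA, hyB', if_true, if_false]
          linarith
      · have hyA : y ∉ A := fun h => hyB' (hAB h)
        have := hgmono A B hAB hB
        simp only [hyA, hyB', if_false]
        linarith
    · intro A B hA hB
      have hs := hgsub A B hA hB
      by_cases hyA : y ∈ A <;> by_cases hyB' : y ∈ B <;>
        simp only [Finset.mem_union, Finset.mem_inter, hyA, hyB', true_or,
          or_true, or_self, true_and, and_true, and_self, if_true, if_false,
          false_or, false_and] <;> linarith
    · intro A hA
      have hyA : y ∉ A := fun h => hy (hA h)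
      simp only [hyA, if_false, sub_zero]
      exact hgX A hA
    · intro A hA
      simp only [htight A, hgY A hA]
  · rintro ⟨h, ⟨hh0, hhnn, hhmono, hhsub⟩, hhX, hhY⟩
    have hM : h M = fy M := by
      rw [hhY M Finset.subset_union_left, htight M]
      simp [hyM]
    have hMy : h (M ∪ {y}) = fy M := by
      rw [hhY (M ∪ {y}) (le_refl _), htight (M ∪ {y})]
      simp [he]
    have hMXv : h (M ∪ X) = fX (M ∪ X) := hhX (M ∪ X) (le_refl _)
    have hE : h (M ∪ X ∪ {y}) = fX (M ∪ X) := by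
      have h1 := hhmono (M ∪ X) (M ∪ X ∪ {y}) Finset.subset_union_left (le_refl _)
      have h2 := hhsub (M ∪ X) (M ∪ {y}) Finset.subset_union_left
        (by intro a ha
            rcases Finset.mem_union.mp ha with h' | h'
            · exact Finset.mem_union_left _ (Finset.mem_union_left _ h')
            · exact Finset.mem_union_right _ h')
      rw [hU2, hI2, hMy, hM, hMXv] at h2
      linarith
    refine ⟨fun A => h A + (if y ∈ A then e else 0), ⟨?_, ?_, ?_, ?_⟩, ?_, ?_, ?_⟩
    · simp [hh0]
    · intro A hA
      have := hhnn A hA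
      by_cases hyA : y ∈ A <;> simp only [hyA, if_true, if_false] <;> linarith
    · intro A B hAB hB
      have := hhmono A B hAB hB
      by_cases hyB' : y ∈ B
      · by_cases hyA : y ∈ A <;> simp only [hyA, hyB', if_true, if_false] <;> linarith
      · have hyA : y ∉ A := fun h' => hyB' (hAB h')
        simp only [hyA, hyB', if_false]
        linarith
    · intro A B hA hB
      have hs := hhsub A B hA hB
      by_cases hyA : y ∈ A <;> by_cases hyB' : y ∈ B <;>
        simp only [Finset.mem_union, Finset.mem_inter, hyA, hyB', true_or,
          or_true, or_self, true_and, and_true, and_self, if_true, if_false,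
          false_or, false_and] <;> linarith
    · intro A hA
      have hyA : y ∉ A := fun h' => hy (hA h')
      simp only [hyA, if_false, add_zero]
      exact hhX A hA
    · intro A hA
      simp only [hhY A hA, htight A]
      by_cases hyA : y ∈ A <;> simp [hyA]
    · unfold pmi
      have g1 : y ∉ X ∪ M := by
        simp only [Finset.mem_union]
        rintro (h' | h')
        · exact hyX h'
        · exact hyM h'
      have g2 : y ∈ ({y} : Finset α) ∪ M := Finset.mem_union_left _ (Finset.mem_singleton_self y)
      have g3 : y ∈ X ∪ {y} ∪ M := Finset.mem_union_left _
        (Finset.mem_union_right _ (Finset.mem_singleton_self y))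
      have e1 : h (X ∪ M) = fX (M ∪ X) := by
        rw [Finset.union_comm]; exact hMXv
      have e2 : h ({y} ∪ M) = fy M := by rw [Finset.union_comm]; exact hMy
      have e3 : h (X ∪ {y} ∪ M) = fX (M ∪ X) := by rw [h3]; exact hE
      simp only [g1, g2, g3, hyM, if_true, if_false]
      rw [e1, e2, e3, hM]
      ring
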